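/- For every τ ∈ (0,2) there exists a constant c > 0 such that for all ω ≥ 0 and all t ≥ 0, E_τ(ω t^τ) ≤ c · exp( ω^{1/τ} t ). -/

import Mathlib

open Real

lemma aux_one_le_gamma {θ : ℝ} (h0 : 0 ≤ θ) : (1:ℝ) ≤ Real.Gamma (2 + θ) := by
  have hθ1 : (0:ℝ) < 1 + θ := by linarith
  set μ : ℝ := 1 / (1 + θ) with hμ
  have hμpos : 0 < μ := by positivity
  have hμ1 : μ ≤ 1 := by rw [hμ, div_le_one hθ1]; linarith
  have hmem1 : (1:ℝ) ∈ Set.Ioi (0:ℝ) := by norm_num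
  have hmem2 : (2 + θ:ℝ) ∈ Set.Ioi (0:ℝ) := by simp only [Set.mem_Ioi]; linarith
  have key := Real.convexOn_Gamma.2 hmem1 hmem2 (by linarith : (0:ℝ) ≤ 1 - μ) hμpos.le
    (by ring : (1 - μ) + μ = 1)
  have harg : (1 - μ) • (1:ℝ) + μ • (2 + θ) = 2 := by
    simp only [smul_eq_mul, hμ]
    field_simp
    ring
  rw [harg, Real.Gamma_one, smul_eq_mul, smul_eq_mul] at key
  have h2 : Real.Gamma 2 = 1 := Real.Gamma_two
  rw [h2] at key
  nlinarith [key]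

lemma aux_gamma_half {θ : ℝ} (h0 : 0 ≤ θ) (h1 : θ ≤ 1) : (1:ℝ)/2 ≤ Real.Gamma (θ + 1) := by
  have h2 : Real.Gamma (θ + 1 + 1) = (θ + 1) * Real.Gamma (θ + 1) :=
    Real.Gamma_add_one (by linarith)
  have h3 : (1:ℝ) ≤ Real.Gamma (2 + θ) := aux_one_le_gamma h0
  have h4 : (2:ℝ) + θ = θ + 1 + 1 := by ring
  rw [h4, h2] at h3
  nlinarith [Real.Gamma_pos_of_pos (by linarith : (0:ℝ) < θ + 1)]

lemma aux_gammaA {θ : ℝ} (h0 : 0 ≤ θ) (h1 : θ ≤ 1) (m : ℕ) :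
    1/2 * (m.factorial : ℝ) * ((m:ℝ) + 1) ^ θ ≤ Real.Gamma ((m:ℝ) + θ + 1) := by
  induction m with
  | zero => simpa using aux_gamma_half h0 h1
  | succ m ih =>
    have hA : (0:ℝ) < (m:ℝ) + 1 := by positivity
    have hrec : Real.Gamma (((m+1:ℕ):ℝ) + θ + 1) = ((m:ℝ) + θ + 1) * Real.Gamma ((m:ℝ) + θ + 1) := by
      push_cast
      have h5 : (m:ℝ) + 1 + θ + 1 = ((m:ℝ) + θ + 1) + 1 := by ring
      rw [h5, Real.Gamma_add_one (by positivity)]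
    have hbern : ((m:ℝ) + 1 + 1) ^ θ ≤ ((m:ℝ) + 1) ^ θ * (1 + θ / ((m:ℝ) + 1)) := by
      have h1' : (m:ℝ) + 1 + 1 = ((m:ℝ) + 1) * (1 + 1/((m:ℝ)+1)) := by field_simp
      rw [h1', Real.mul_rpow hA.le (by positivity)]
      have hge : (0:ℝ) ≤ 1/((m:ℝ)+1) := by positivity
      have hb : ((1:ℝ) + 1/((m:ℝ)+1)) ^ θ ≤ 1 + θ * (1/((m:ℝ)+1)) :=
        rpow_one_add_le_one_add_mul_self (by linarith) h0 h1
      calc ((m:ℝ)+1)^θ * (1 + 1/((m:ℝ)+1))^θ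
          ≤ ((m:ℝ)+1)^θ * (1 + θ * (1/((m:ℝ)+1))) :=
            mul_le_mul_of_nonneg_left hb (Real.rpow_nonneg hA.le θ)
        _ = ((m:ℝ)+1)^θ * (1 + θ/((m:ℝ)+1)) := by ring
    have hfac : (((m+1):ℕ).factorial : ℝ) = ((m:ℝ)+1) * (m.factorial : ℝ) := by
      rw [Nat.factorial_succ]; push_cast; ring
    rw [hrec]
    have hcast : (((m+1):ℕ):ℝ) = (m:ℝ) + 1 := by push_cast; ring
    rw [hcast, hfac]
    calc 1/2 * (((m:ℝ)+1) * (m.factorial : ℝ)) * ((m:ℝ) + 1 + 1) ^ θ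
        ≤ 1/2 * (((m:ℝ)+1) * (m.factorial : ℝ)) * (((m:ℝ)+1)^θ * (1 + θ/((m:ℝ)+1))) := by
          apply mul_le_mul_of_nonneg_left hbern (by positivity)
      _ = ((m:ℝ)+θ+1) * (1/2 * (m.factorial:ℝ) * ((m:ℝ)+1)^θ) := by
          field_simp
          ring
      _ ≤ ((m:ℝ)+θ+1) * Real.Gamma ((m:ℝ)+θ+1) :=
          mul_le_mul_of_nonneg_left ih (by positivity)

lemma aux_term {x s : ℝ} (hx : 0 ≤ x) (hs : 0 ≤ s) :
    x ^ s / Real.Gamma (s + 1) ≤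
      2 * (x ^ (⌊s⌋₊) / ((⌊s⌋₊).factorial : ℝ) + x ^ (⌊s⌋₊ + 1) / ((⌊s⌋₊ + 1).factorial : ℝ)) := by
  set m : ℕ := ⌊s⌋₊ with hm
  set θ : ℝ := s - m with hθ
  have hθ0 : 0 ≤ θ := by
    have := Nat.floor_le hs
    simp only [hθ]; linarith
  have hθ1 : θ ≤ 1 := by
    have := (Nat.lt_floor_add_one s).le
    simp only [hθ]; push_cast at this ⊢; linarith
  have hsm : (m:ℝ) + θ = s := by simp [hθ]
  have hΓ : 1/2 * (m.factorial : ℝ) * ((m:ℝ) + 1) ^ θ ≤ Real.Gamma (s + 1) := by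
    have := aux_gammaA hθ0 hθ1 m
    rwa [hsm] at this
  have hRHSnn : 0 ≤ x ^ m / (m.factorial : ℝ) + x ^ (m + 1) / ((m + 1).factorial : ℝ) := by
    positivity
  rcases eq_or_lt_of_le hx with hx0 | hxpos
  · -- x = 0
    rcases eq_or_lt_of_le hs with hs0 | hspos
    · -- s = 0
      have hm0 : m = 0 := by simp [hm, ← hs0]
      rw [← hs0, ← hx0, hm0]
      norm_num [Real.Gamma_one]
    · rw [← hx0, Real.zero_rpow hspos.ne']
      rw [zero_div]
      positivity
  · -- x > 0
    have hfm : (0:ℝ) < (m.factorial : ℝ) := by positivity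
    have hfm1 : (0:ℝ) < ((m+1).factorial : ℝ) := by positivity
    set a : ℝ := x ^ m / (m.factorial : ℝ) with ha
    set b : ℝ := x ^ (m+1) / ((m+1).factorial : ℝ) with hb
    have hapos : 0 < a := by rw [ha]; positivity
    have hbpos : 0 < b := by rw [hb]; positivity
    have hgeo : a ^ (1-θ) * b ^ θ ≤ (1-θ) * a + θ * b :=
      Real.geom_mean_le_arith_mean2_weighted (by linarith) hθ0 hapos.le hbpos.le (by ring)
    have heq : a ^ (1-θ) * b ^ θ = x ^ s / ((m.factorial : ℝ) * ((m:ℝ)+1) ^ θ) := by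
      rw [ha, hb, Real.div_rpow (by positivity) hfm.le, Real.div_rpow (by positivity) hfm1.le]
      rw [← Real.rpow_natCast x m, ← Real.rpow_natCast x (m+1),
        ← Real.rpow_mul hx, ← Real.rpow_mul hx]
      rw [div_mul_div_comm, ← Real.rpow_add hxpos]
      have hnum : (m:ℝ) * (1 - θ) + ((m:ℕ)+1:ℕ) * θ = s := by push_cast; linarith [hsm]
      rw [hnum]
      congr 1
      have hf1 : (((m+1):ℕ).factorial : ℝ) = ((m:ℝ)+1) * (m.factorial : ℝ) := by
        rw [Nat.factorial_succ]; push_cast; ring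
      rw [hf1, Real.mul_rpow (by positivity) hfm.le]
      rw [show (m.factorial:ℝ)^(1-θ) * (((m:ℝ)+1)^θ * (m.factorial:ℝ)^θ)
          = ((m.factorial:ℝ)^(1-θ) * (m.factorial:ℝ)^θ) * ((m:ℝ)+1)^θ by ring]
      rw [← Real.rpow_add hfm]
      norm_num
    have hΓpos : 0 < Real.Gamma (s+1) := Real.Gamma_pos_of_pos (by linarith)
    have hden : (0:ℝ) < 1/2 * (m.factorial : ℝ) * ((m:ℝ) + 1) ^ θ := by positivity
    calc x ^ s / Real.Gamma (s + 1)
        ≤ x ^ s / (1/2 * (m.factorial : ℝ) * ((m:ℝ) + 1) ^ θ) := by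
          apply div_le_div_of_nonneg_left (by positivity) hden hΓ
      _ = 2 * (x ^ s / ((m.factorial : ℝ) * ((m:ℝ)+1) ^ θ)) := by
          field_simp
      _ = 2 * (a ^ (1-θ) * b ^ θ) := by rw [heq]
      _ ≤ 2 * ((1-θ) * a + θ * b) := by linarith [hgeo]
      _ ≤ 2 * (a + b) := by nlinarith [hapos.le, hbpos.le]

lemma aux_series {τ : ℝ} (hτ : 0 < τ) : ∃ c : ℝ, 0 < c ∧ ∀ x : ℝ, 0 ≤ x →
    (∑' n : ℕ, x ^ ((n:ℝ) * τ) / Real.Gamma ((n:ℝ) * τ + 1)) ≤ c * Real.exp x := by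
  set K : ℕ := ⌈1/τ⌉₊ + 1 with hK
  have hKpos : 0 < K := Nat.succ_pos _
  haveI : NeZero K := ⟨hKpos.ne'⟩
  have hKτ : 1 ≤ (K:ℝ) * τ := by
    have h1 : 1/τ ≤ (⌈1/τ⌉₊ : ℝ) := Nat.le_ceil _
    have h2 : ((⌈1/τ⌉₊:ℕ):ℝ) ≤ (K:ℝ) := by rw [hK]; push_cast; linarith
    have h3 : (1:ℝ) = (1/τ) * τ := by field_simp
    rw [h3]; nlinarith
  refine ⟨4 * K, by positivity, fun x hx => ?_⟩
  set f : ℕ → ℝ := fun k => x ^ k / (k.factorial : ℝ) with hf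
  have hfsum : Summable f := Real.summable_pow_div_factorial x
  have hfnn : ∀ k, 0 ≤ f k := fun k => by simp only [hf]; positivity
  have hftsum : ∑' k, f k = Real.exp x := by
    simp only [hf]
    rw [Real.exp_eq_exp_ℝ, NormedSpace.exp_eq_tsum_div]
  set term : ℕ → ℝ := fun n => x ^ ((n:ℝ) * τ) / Real.Gamma ((n:ℝ) * τ + 1) with hterm
  have htnn : ∀ n, 0 ≤ term n := by
    intro n
    have hn : (0:ℝ) ≤ (n:ℝ) * τ := mul_nonneg (Nat.cast_nonneg n) hτ.le
    exact div_nonneg (Real.rpow_nonneg hx _) (Real.Gamma_pos_of_pos (by linarith)).le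
  have hbound : ∀ n : ℕ, term n ≤ 2 * (f ⌊(n:ℝ)*τ⌋₊ + f (⌊(n:ℝ)*τ⌋₊ + 1)) := by
    intro n
    have h := aux_term hx (mul_nonneg (Nat.cast_nonneg n) hτ.le)
    simp only [hterm, hf]
    convert h using 3 <;> ring
  have hmono : ∀ r : ℕ, StrictMono (fun q : ℕ => ⌊((q * K + r : ℕ):ℝ) * τ⌋₊) := by
    intro r
    apply strictMono_nat_of_lt_succ
    intro q
    have hy : (0:ℝ) ≤ ((q * K + r : ℕ):ℝ) * τ := mul_nonneg (Nat.cast_nonneg _) hτ.le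
    have hfl : (⌊((q*K+r:ℕ):ℝ) * τ⌋₊ : ℝ) ≤ ((q*K+r:ℕ):ℝ) * τ := Nat.floor_le hy
    have hstep : (((q+1)*K + r : ℕ):ℝ) * τ = ((q*K+r:ℕ):ℝ) * τ + (K:ℝ)*τ := by
      push_cast; ring
    have hle : ((⌊((q*K+r:ℕ):ℝ) * τ⌋₊ + 1 : ℕ):ℝ) ≤ (((q+1)*K + r : ℕ):ℝ) * τ := by
      have hc : ((⌊((q*K+r:ℕ):ℝ) * τ⌋₊ + 1 : ℕ):ℝ) = ((⌊((q*K+r:ℕ):ℝ) * τ⌋₊:ℕ):ℝ) + 1 := by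
        exact_mod_cast rfl
      rw [hc, hstep]
      linarith
    have h2 : ⌊((q*K+r:ℕ):ℝ)*τ⌋₊ + 1 ≤ ⌊(((q+1)*K+r:ℕ):ℝ)*τ⌋₊ := Nat.le_floor hle
    omega
  have hres : ∀ r : ℕ, Summable (fun q : ℕ => term (q * K + r)) ∧
      (∑' q : ℕ, term (q * K + r)) ≤ 4 * Real.exp x := by
    intro r
    set e1 : ℕ → ℕ := fun q => ⌊((q * K + r : ℕ):ℝ) * τ⌋₊ with he1
    have hm1 : StrictMono e1 := hmono r
    set e2 : ℕ → ℕ := fun q => e1 q + 1 with he2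
    have hm2 : StrictMono e2 := fun a b h => by
      simp only [he2]
      exact Nat.add_lt_add_right (hm1 h) 1
    have hs1 : Summable (fun q => f (e1 q)) := hfsum.comp_injective hm1.injective
    have hs2 : Summable (fun q => f (e2 q)) := hfsum.comp_injective hm2.injective
    have hg : Summable (fun q => 2 * (f (e1 q) + f (e2 q))) := (hs1.add hs2).mul_left 2
    have hbnd : ∀ q, term (q*K+r) ≤ 2 * (f (e1 q) + f (e2 q)) := fun q => hbound (q*K+r)
    have hsum : Summable (fun q => term (q*K+r)) :=
      Summable.of_nonneg_of_le (fun q => htnn _) hbnd hg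
    refine ⟨hsum, ?_⟩
    have ht1 : ∑' q, f (e1 q) ≤ Real.exp x := by
      rw [← hftsum]
      exact Summable.tsum_le_tsum_of_inj e1 hm1.injective (fun c _ => hfnn c) (fun q => le_rfl) hs1 hfsum
    have ht2 : ∑' q, f (e2 q) ≤ Real.exp x := by
      rw [← hftsum]
      exact Summable.tsum_le_tsum_of_inj e2 hm2.injective (fun c _ => hfnn c) (fun q => le_rfl) hs2 hfsum
    calc ∑' q, term (q*K+r) ≤ ∑' q, 2 * (f (e1 q) + f (e2 q)) := Summable.tsum_le_tsum hbnd hsum hg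
      _ = 2 * ((∑' q, f (e1 q)) + ∑' q, f (e2 q)) := by rw [tsum_mul_left, Summable.tsum_add hs1 hs2]
      _ ≤ 2 * (Real.exp x + Real.exp x) := by linarith
      _ = 4 * Real.exp x := by ring
  set E : ℕ ≃ Fin K × ℕ := (Nat.divModEquiv K).trans (Equiv.prodComm ℕ (Fin K)) with hE
  have hEsymm : ∀ p : Fin K × ℕ, E.symm p = p.2 * K + (p.1 : ℕ) := fun p => rfl
  set F : Fin K × ℕ → ℝ := fun p => term (p.2 * K + (p.1:ℕ)) with hF
  have hFeq : ∀ p, F p = term (E.symm p) := fun p => by rw [hEsymm]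
  have hFnn : ∀ p, 0 ≤ F p := fun p => htnn _
  have hFsummable : Summable F := by
    rw [summable_prod_of_nonneg hFnn]
    exact ⟨fun r => (hres r).1, Summable.of_finite⟩
  have hcomp : (term ∘ E.symm) = F := funext fun p => (hFeq p).symm
  have htsum_eq : ∑' n, term n = ∑' p, F p := by
    rw [← Equiv.tsum_eq E.symm term]
    exact tsum_congr fun p => (hFeq p).symm
  have hfin : ∑' p, F p ≤ (K:ℝ) * (4 * Real.exp x) := by
    calc ∑' p, F p = ∑' (r : Fin K), ∑' q, F (r, q) :=
          Summable.tsum_prod' hFsummable (fun r => (hres r).1)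
      _ = ∑ r : Fin K, ∑' q, F (r, q) := tsum_fintype _
      _ ≤ ∑ _r : Fin K, 4 * Real.exp x := Finset.sum_le_sum (fun r _ => (hres r).2)
      _ = (K:ℝ) * (4 * Real.exp x) := by
          rw [Finset.sum_const, Finset.card_univ, Fintype.card_fin, nsmul_eq_mul]
  calc (∑' n : ℕ, term n) ≤ (K:ℝ) * (4 * Real.exp x) := htsum_eq ▸ hfin
    _ = 4 * (K:ℝ) * Real.exp x := by ring

/-- The Mittag-Leffler function `E_τ(z) = Σ_{n≥0} zⁿ/Γ(nτ+1)`. -/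
noncomputable def mittagLeffler (τ z : ℝ) : ℝ :=
  ∑' n : ℕ, z ^ n / Real.Gamma ((n : ℝ) * τ + 1)

/-- For every `τ ∈ (0,2)` there is `c > 0` with `E_τ(ω t^τ) ≤ c exp(ω^{1/τ} t)`
for all `ω, t ≥ 0`. -/
theorem mittagLeffler_le_exp (τ : ℝ) (hτ0 : 0 < τ) (hτ2 : τ < 2) :
    ∃ c : ℝ, 0 < c ∧ ∀ ω t : ℝ, 0 ≤ ω → 0 ≤ t →
      mittagLeffler τ (ω * t ^ τ) ≤ c * Real.exp (ω ^ (1/τ) * t) := by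
  obtain ⟨c, hc, hbound⟩ := aux_series hτ0
  refine ⟨c, hc, fun ω t hω ht => ?_⟩
  have hτ' : τ ≠ 0 := hτ0.ne'
  set x : ℝ := ω ^ (1/τ) * t with hxdef
  have hx : 0 ≤ x := mul_nonneg (Real.rpow_nonneg hω _) ht
  have harg : ω * t ^ τ = x ^ τ := by
    rw [hxdef, Real.mul_rpow (Real.rpow_nonneg hω _) ht, ← Real.rpow_mul hω,
      one_div, inv_mul_cancel₀ hτ', Real.rpow_one]
  have hpow : ∀ n : ℕ, (ω * t ^ τ) ^ n = x ^ ((n:ℝ) * τ) := by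
    intro n
    rw [harg, ← Real.rpow_natCast (x ^ τ) n, ← Real.rpow_mul hx, mul_comm τ (n:ℝ)]
  have hml : mittagLeffler τ (ω * t ^ τ) = ∑' n : ℕ, x ^ ((n:ℝ)*τ) / Real.Gamma ((n:ℝ)*τ + 1) := by
    unfold mittagLeffler
    exact tsum_congr fun n => by rw [hpow n]
  rw [hml]
  exact hbound x hx
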